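/- Let Z1 and Z2 be pointed matched circles of genus k, with grading groups G(Z1) and G(Z2) as above, and let Upsilon_t : G(Z_t) → G_{Z/2}(Z_t) := (Z/2) × H_1(F(Z_t)) be the group homomorphisms determined by Upsilon_t(lambda) = (1,0) and Upsilon_t(gamma(B_i)) = (0, h(B_i)). Suppose phi : G(Z1) → G(Z2) is a group isomorphism with phi(lambda) = lambda. Then: (1) phi descends to an isomorphism phibar : G_{Z/2}(Z1) → G_{Z/2}(Z2), i.e. Upsilon_2 ∘ phi = phibar ∘ Upsilon_1; and (2) as an outer isomorphism satisfying phi(lambda) = lambda, phi is determined by phibar: if phi' is another isomorphism with phi'(lambda) = lambda inducing the same map phibar, then phi and phi' differ by an inner automorphism. -/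

import Mathlib

namespace St17Aux

variable {N : ℕ} {Λ : Type*} [AddCommGroup Λ] {Ghat : Type*} [Group Ghat]

section basic

variable (B : Λ →ₗ[ℤ] Λ →ₗ[ℤ] ℤ) (e : ℚ × Λ ≃ Ghat)

theorem e_one
    (he : ∀ p q : ℚ × Λ, e p * e q = e (p.1 + q.1 + ((B p.2 q.2 : ℤ) : ℚ), p.2 + q.2)) :
    e (0, 0) = (1 : Ghat) := by
  have h : e (0, 0) * e (0, 0) = e (0, 0) := by rw [he]; simp
  exact mul_left_cancel (h.trans (mul_one _).symm)

theorem symm_one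
    (he : ∀ p q : ℚ × Λ, e p * e q = e (p.1 + q.1 + ((B p.2 q.2 : ℤ) : ℚ), p.2 + q.2)) :
    e.symm (1 : Ghat) = (0, 0) := by
  rw [← e_one B e he, e.symm_apply_apply]

theorem Bzz (skew : ∀ x y, B x y = - B y x) (h : Λ) : B h h = 0 := by
  have := skew h h; omega

theorem e_inv
    (he : ∀ p q : ℚ × Λ, e p * e q = e (p.1 + q.1 + ((B p.2 q.2 : ℤ) : ℚ), p.2 + q.2))
    (skew : ∀ x y, B x y = - B y x) (p : ℚ × Λ) :
    (e p)⁻¹ = e (-p.1, -p.2) := by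
  apply inv_eq_of_mul_eq_one_right
  rw [he]
  have hz : B p.2 (-p.2) = 0 := by
    have := Bzz B skew p.2
    simp [this]
  rw [hz]
  simpa using e_one B e he

theorem symm_mul
    (he : ∀ p q : ℚ × Λ, e p * e q = e (p.1 + q.1 + ((B p.2 q.2 : ℤ) : ℚ), p.2 + q.2))
    (x y : Ghat) :
    e.symm (x * y) = ((e.symm x).1 + (e.symm y).1 +
      ((B (e.symm x).2 (e.symm y).2 : ℤ) : ℚ), (e.symm x).2 + (e.symm y).2) := by
  have h := he (e.symm x) (e.symm y)
  rw [e.apply_symm_apply, e.apply_symm_apply] at h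
  rw [h, e.symm_apply_apply]

theorem symm_inv
    (he : ∀ p q : ℚ × Λ, e p * e q = e (p.1 + q.1 + ((B p.2 q.2 : ℤ) : ℚ), p.2 + q.2))
    (skew : ∀ x y, B x y = - B y x) (x : Ghat) :
    e.symm x⁻¹ = (-(e.symm x).1, -(e.symm x).2) := by
  conv_lhs => rw [← e.apply_symm_apply x]
  rw [e_inv B e he skew, e.symm_apply_apply]

theorem epow
    (he : ∀ p q : ℚ × Λ, e p * e q = e (p.1 + q.1 + ((B p.2 q.2 : ℤ) : ℚ), p.2 + q.2))
    (m : ℚ) (n : ℤ) : (e (m, 0)) ^ n = e (n * m, 0) := by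
  let f : Multiplicative ℚ →* Ghat :=
    MonoidHom.mk' (fun q => e (Multiplicative.toAdd q, 0)) (by
      intro a b
      rw [he]
      simp)
  have hf : ∀ q : ℚ, e (q, 0) = f (Multiplicative.ofAdd q) := fun q => rfl
  rw [hf m, ← map_zpow, hf (n * m)]
  congr 1

theorem e_central
    (he : ∀ p q : ℚ × Λ, e p * e q = e (p.1 + q.1 + ((B p.2 q.2 : ℤ) : ℚ), p.2 + q.2))
    (m : ℚ) (x : Ghat) : e (m, 0) * x = x * e (m, 0) := by
  conv_lhs => rw [← e.apply_symm_apply x]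
  conv_rhs => rw [← e.apply_symm_apply x]
  rw [he, he]
  simp [add_comm]

theorem comm_rel
    (he : ∀ p q : ℚ × Λ, e p * e q = e (p.1 + q.1 + ((B p.2 q.2 : ℤ) : ℚ), p.2 + q.2))
    (skew : ∀ x y, B x y = - B y x) (x y : Ghat) :
    x * y = e ((2 * (B (e.symm x).2 (e.symm y).2 : ℤ) : ℤ), 0) * (y * x) := by
  apply e.symm.injective
  rw [symm_mul B e he x y, symm_mul B e he (e _) (y * x), symm_mul B e he y x,
    e.symm_apply_apply]
  have hs : ((B (e.symm y).2 (e.symm x).2 : ℤ) : ℚ)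
      = -((B (e.symm x).2 (e.symm y).2 : ℤ) : ℚ) := by
    exact_mod_cast congrArg (fun z : ℤ => (z : ℚ)) (skew (e.symm y).2 (e.symm x).2)
  refine Prod.ext ?_ ?_
  · simp only []
    push_cast
    simp only [map_zero, LinearMap.zero_apply, Int.cast_zero]
    push_cast
    linarith
  · simp [add_comm]

end basic

section grp

variable (B : Λ →ₗ[ℤ] Λ →ₗ[ℤ] ℤ) (e : ℚ × Λ ≃ Ghat) (b : Module.Basis (Fin N) ℤ Λ)
  (lam : Ghat) (γ : Fin N → Ghat) (G : Subgroup Ghat)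

theorem frac
    (he : ∀ p q : ℚ × Λ, e p * e q = e (p.1 + q.1 + ((B p.2 q.2 : ℤ) : ℚ), p.2 + q.2))
    (skew : ∀ x y, B x y = - B y x)
    (hlam : lam = e (1, 0)) (hγ : ∀ i, γ i = e (-(1/2 : ℚ), b i))
    (hG : G = Subgroup.closure ({lam} ∪ Set.range γ))
    {x : Ghat} (hx : x ∈ G) :
    ∃ z : ℤ, (2:ℚ) * (e.symm x).1 + ((∑ i, b.repr (e.symm x).2 i : ℤ) : ℚ) = 2 * z := by
  rw [hG] at hx
  induction hx using Subgroup.closure_induction with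
  | mem x hx =>
    rcases hx with hx | ⟨i, rfl⟩
    · simp only [Set.mem_singleton_iff] at hx
      subst hx
      rw [hlam, e.symm_apply_apply]
      exact ⟨1, by simp⟩
    · rw [hγ i, e.symm_apply_apply]
      refine ⟨0, ?_⟩
      have : ∑ j, b.repr (b i) j = 1 := by
        simp [Finsupp.single_apply]
      simp only []
      rw [this]
      norm_num
  | one =>
    refine ⟨0, ?_⟩
    rw [symm_one B e he]
    simp
  | mul x y hx hy ihx ihy =>
    obtain ⟨z, hz⟩ := ihx
    obtain ⟨z', hz'⟩ := ihy
    refine ⟨z + z' + B (e.symm x).2 (e.symm y).2, ?_⟩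
    rw [symm_mul B e he]
    have hsum : (∑ i, b.repr ((e.symm x).2 + (e.symm y).2) i)
        = (∑ i, b.repr (e.symm x).2 i) + ∑ i, b.repr (e.symm y).2 i := by
      simp [Finset.sum_add_distrib]
    simp only []
    rw [hsum]
    push_cast at hz hz' ⊢
    linarith
  | inv x hx ihx =>
    obtain ⟨z, hz⟩ := ihx
    refine ⟨-z, ?_⟩
    rw [symm_inv B e he skew]
    have hsum : (∑ i, b.repr (-(e.symm x).2) i) = -∑ i, b.repr (e.symm x).2 i := by
      simp [Finset.sum_neg_distrib]
    simp only []
    rw [hsum]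
    push_cast at hz ⊢
    linarith

theorem lemd
    (he : ∀ p q : ℚ × Λ, e p * e q = e (p.1 + q.1 + ((B p.2 q.2 : ℤ) : ℚ), p.2 + q.2))
    (skew : ∀ x y, B x y = - B y x)
    (hlam : lam = e (1, 0)) (hγ : ∀ i, γ i = e (-(1/2 : ℚ), b i))
    (hG : G = Subgroup.closure ({lam} ∪ Set.range γ))
    {x y : Ghat} (hx : x ∈ G) (hy : y ∈ G)
    (hsnd : (e.symm x).2 = (e.symm y).2) : ∃ c : ℤ, x = lam ^ c * y := by
  obtain ⟨z, hz⟩ := frac B e b lam γ G he skew hlam hγ hG hx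
  obtain ⟨z', hz'⟩ := frac B e b lam γ G he skew hlam hγ hG hy
  refine ⟨z - z', ?_⟩
  have hm : (e.symm x).1 = ((z - z' : ℤ) : ℚ) + (e.symm y).1 := by
    rw [hsnd] at hz
    push_cast at hz hz' ⊢
    linarith
  rw [hlam, epow B e he]
  conv_rhs => rw [← e.apply_symm_apply y, he]
  conv_lhs => rw [← e.apply_symm_apply x]
  congr 1
  refine Prod.ext ?_ ?_
  · simp [hm]
  · simp [hsnd]

theorem hom_ext_on_gens {M : Type*} [Monoid M] (k : Set Ghat)
    (hG : G = Subgroup.closure k) (f g : G →* M)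
    (h : ∀ x (hx : x ∈ G), x ∈ k → f ⟨x, hx⟩ = g ⟨x, hx⟩) (y : G) : f y = g y := by
  subst hG
  have h2 : Set.EqOn f g (((↑) : Subgroup.closure k → Ghat) ⁻¹' k) := by
    rintro ⟨z, hz⟩ hzk
    exact h z hz hzk
  have h3 := MonoidHom.eqOn_closure h2
  rw [Subgroup.closure_closure_coe_preimage] at h3
  exact h3 (by simp)

theorem ups_snd
    (he : ∀ p q : ℚ × Λ, e p * e q = e (p.1 + q.1 + ((B p.2 q.2 : ℤ) : ℚ), p.2 + q.2))
    (hlam : lam = e (1, 0)) (hγ : ∀ i, γ i = e (-(1/2 : ℚ), b i))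
    (hG : G = Subgroup.closure ({lam} ∪ Set.range γ))
    (hlamG : lam ∈ G) (hγG : ∀ i, γ i ∈ G)
    (Υ : G →* Multiplicative (ZMod 2 × Λ))
    (hΥlam : Υ ⟨lam, hlamG⟩ = Multiplicative.ofAdd ((1, 0) : ZMod 2 × Λ))
    (hΥγ : ∀ i, Υ ⟨γ i, hγG i⟩ = Multiplicative.ofAdd ((0, b i) : ZMod 2 × Λ))
    (x : G) : (Multiplicative.toAdd (Υ x)).2 = (e.symm (x : Ghat)).2 := by
  let P2 : Ghat →* Multiplicative Λ :=
    MonoidHom.mk' (fun z => Multiplicative.ofAdd (e.symm z).2)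
      (by
        intro a c
        show Multiplicative.ofAdd (e.symm (a * c)).2 = _
        rw [symm_mul B e he]
        simp)
  let f : G →* Multiplicative Λ := ((AddMonoidHom.snd (ZMod 2) Λ).toMultiplicative).comp Υ
  let g : G →* Multiplicative Λ := P2.comp G.subtype
  have key : f x = g x := by
    refine hom_ext_on_gens G _ hG f g ?_ x
    intro z hz hzk
    rcases hzk with hzl | ⟨i, rfl⟩
    · simp only [Set.mem_singleton_iff] at hzl
      subst hzl
      have hy : (⟨z, hz⟩ : G) = ⟨z, hlamG⟩ := rfl
      simp only [f, g, MonoidHom.comp_apply, hy, hΥlam]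
      simp [P2, hlam, e.symm_apply_apply]
    · have hy : (⟨γ i, hz⟩ : G) = ⟨γ i, hγG i⟩ := rfl
      simp only [f, g, MonoidHom.comp_apply, hy, hΥγ i]
      simp [P2, hγ i, e.symm_apply_apply]
  simpa [f, g, P2] using congrArg Multiplicative.toAdd key

theorem ups_lam_pow (hlamG : lam ∈ G)
    (Υ : G →* Multiplicative (ZMod 2 × Λ))
    (hΥlam : Υ ⟨lam, hlamG⟩ = Multiplicative.ofAdd ((1, 0) : ZMod 2 × Λ))
    (c : ℤ) :
    Υ ((⟨lam, hlamG⟩ : G) ^ c) = Multiplicative.ofAdd (((c : ZMod 2), 0) : ZMod 2 × Λ) := by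
  rw [map_zpow, hΥlam, ← ofAdd_zsmul]
  congr 1
  refine Prod.ext ?_ ?_ <;> simp [zsmul_eq_mul]

theorem ker_char
    (he : ∀ p q : ℚ × Λ, e p * e q = e (p.1 + q.1 + ((B p.2 q.2 : ℤ) : ℚ), p.2 + q.2))
    (skew : ∀ x y, B x y = - B y x)
    (hlam : lam = e (1, 0)) (hγ : ∀ i, γ i = e (-(1/2 : ℚ), b i))
    (hG : G = Subgroup.closure ({lam} ∪ Set.range γ))
    (hlamG : lam ∈ G) (hγG : ∀ i, γ i ∈ G)
    (Υ : G →* Multiplicative (ZMod 2 × Λ))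
    (hΥlam : Υ ⟨lam, hlamG⟩ = Multiplicative.ofAdd ((1, 0) : ZMod 2 × Λ))
    (hΥγ : ∀ i, Υ ⟨γ i, hγG i⟩ = Multiplicative.ofAdd ((0, b i) : ZMod 2 × Λ))
    (x : G) (hx : Υ x = 1) :
    ∃ c : ℤ, x = (⟨lam, hlamG⟩ : G) ^ c ∧ (c : ZMod 2) = 0 := by
  have h2 : (e.symm (x : Ghat)).2 = 0 := by
    rw [← ups_snd B e b lam γ G he hlam hγ hG hlamG hγG Υ hΥlam hΥγ x, hx]
    simp
  have h1 : (e.symm (1 : Ghat)).2 = 0 := by rw [symm_one B e he]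
  obtain ⟨c, hc⟩ := lemd B e b lam γ G he skew hlam hγ hG x.2 G.one_mem (h2.trans h1.symm)
  rw [mul_one] at hc
  have hxc : x = (⟨lam, hlamG⟩ : G) ^ c := Subtype.ext (by rw [hc]; simp)
  refine ⟨c, hxc, ?_⟩
  rw [hxc, ups_lam_pow lam G hlamG Υ hΥlam] at hx
  have := Multiplicative.ofAdd.injective (hx.trans (ofAdd_zero).symm)
  exact (Prod.ext_iff.mp this).1

theorem ups_surj
    (hlam : lam = e (1, 0)) (hγ : ∀ i, γ i = e (-(1/2 : ℚ), b i))
    (hlamG : lam ∈ G) (hγG : ∀ i, γ i ∈ G)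
    (Υ : G →* Multiplicative (ZMod 2 × Λ))
    (hΥlam : Υ ⟨lam, hlamG⟩ = Multiplicative.ofAdd ((1, 0) : ZMod 2 × Λ))
    (hΥγ : ∀ i, Υ ⟨γ i, hγG i⟩ = Multiplicative.ofAdd ((0, b i) : ZMod 2 × Λ)) :
    Function.Surjective Υ := by
  let T : AddSubgroup Λ :=
    { carrier := {h | Multiplicative.ofAdd ((0 : ZMod 2), h) ∈ Υ.range}
      zero_mem' := by
        have : Multiplicative.ofAdd (((0 : ZMod 2), (0:Λ))) = 1 := rfl
        simp only [Set.mem_setOf_eq, this]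
        exact one_mem _
      add_mem' := by
        intro a c ha hc
        have hm := mul_mem (show Multiplicative.ofAdd ((0 : ZMod 2), a) ∈ Υ.range from ha)
          (show Multiplicative.ofAdd ((0 : ZMod 2), c) ∈ Υ.range from hc)
        rw [← ofAdd_add] at hm
        simpa using hm
      neg_mem' := by
        intro a ha
        have hm := inv_mem (show Multiplicative.ofAdd ((0 : ZMod 2), a) ∈ Υ.range from ha)
        rw [← ofAdd_neg] at hm
        simpa using hm }
  have hT : ∀ h : Λ, h ∈ T := by
    intro h
    have h1 : Submodule.span ℤ (Set.range b) ≤ AddSubgroup.toIntSubmodule T := by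
      rw [Submodule.span_le]
      rintro _ ⟨i, rfl⟩
      exact ⟨⟨γ i, hγG i⟩, hΥγ i⟩
    have h2 : h ∈ Submodule.span ℤ (Set.range ⇑b) := by rw [b.span_eq]; trivial
    exact h1 h2
  intro t
  have h0 : Multiplicative.ofAdd ((0 : ZMod 2), (Multiplicative.toAdd t).2) ∈ Υ.range :=
    hT _
  have h1 : Multiplicative.ofAdd (((Multiplicative.toAdd t).1, (0:Λ))) ∈ Υ.range := by
    have hpow := pow_mem
      (show Multiplicative.ofAdd ((1, 0) : ZMod 2 × Λ) ∈ Υ.range from ⟨⟨lam, hlamG⟩, hΥlam⟩)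
      (Multiplicative.toAdd t).1.val
    rw [← ofAdd_nsmul] at hpow
    have : (Multiplicative.toAdd t).1.val • (((1:ZMod 2), (0:Λ))) = ((Multiplicative.toAdd t).1, (0:Λ)) := by
      refine Prod.ext ?_ ?_ <;> simp [nsmul_eq_mul]
    rwa [this] at hpow
  have := mul_mem (show _ ∈ Υ.range from h1) (show _ ∈ Υ.range from h0)
  rw [← ofAdd_add] at this
  have heq : ((Multiplicative.toAdd t).1, (0:Λ)) + ((0 : ZMod 2), (Multiplicative.toAdd t).2) = Multiplicative.toAdd t := by
    refine Prod.ext ?_ ?_ <;> simp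
  rw [heq, ofAdd_toAdd] at this
  exact this

theorem exists_pi_eq
    (he : ∀ p q : ℚ × Λ, e p * e q = e (p.1 + q.1 + ((B p.2 q.2 : ℤ) : ℚ), p.2 + q.2))
    (skew : ∀ x y, B x y = - B y x)
    (hγ : ∀ i, γ i = e (-(1/2 : ℚ), b i)) (hγG : ∀ i, γ i ∈ G) (h : Λ) :
    ∃ y : Ghat, y ∈ G ∧ (e.symm y).2 = h := by
  let T : AddSubgroup Λ :=
    { carrier := {h | ∃ y : Ghat, y ∈ G ∧ (e.symm y).2 = h}
      zero_mem' := ⟨1, G.one_mem, by rw [symm_one B e he]⟩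
      add_mem' := by
        rintro a c ⟨y, hy, rfl⟩ ⟨z, hz, rfl⟩
        exact ⟨y * z, mul_mem hy hz, by rw [symm_mul B e he]⟩
      neg_mem' := by
        rintro a ⟨y, hy, rfl⟩
        exact ⟨y⁻¹, inv_mem hy, by rw [symm_inv B e he skew]⟩ }
  have h1 : Submodule.span ℤ (Set.range b) ≤ AddSubgroup.toIntSubmodule T := by
    rw [Submodule.span_le]
    rintro _ ⟨i, rfl⟩
    exact ⟨γ i, hγG i, by rw [hγ i, e.symm_apply_apply]⟩
  have h2 : h ∈ Submodule.span ℤ (Set.range ⇑b) := by rw [b.span_eq]; trivial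
  exact h1 h2

end grp

end St17Aux


open St17Aux Multiplicative


/-!
Statement 17: Let `Z₁`, `Z₂` be pointed matched circles of genus `k` with
grading groups `G(Z₁)`, `G(Z₂)` (modelled, as in the paper, as the subgroups
of the groups `Ĝₜ` of pairs `(m, h) ∈ ℚ × H₁(F(Zₜ))`, with twisted
multiplication coming from the intersection pairing, generated by the central
element `λ = (1,0)` and the elements `γ(Bᵢ) = (-1/2, h(Bᵢ))`).  Let
`Υₜ : G(Zₜ) → (ℤ/2) × H₁(F(Zₜ))` be the homomorphisms determined by
`Υₜ(λ) = (1,0)` and `Υₜ(γ(Bᵢ)) = (0, h(Bᵢ))`.  Suppose `φ : G(Z₁) ≅ G(Z₂)`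
is a group isomorphism with `φ(λ) = λ`.  Then:
(1) `φ` descends to an isomorphism `φ̄ : (ℤ/2) × Λ₁ ≅ (ℤ/2) × Λ₂` with
    `Υ₂ ∘ φ = φ̄ ∘ Υ₁`; and
(2) as an outer isomorphism with `φ(λ) = λ`, `φ` is determined by `φ̄`: any
    other isomorphism `φ'` with `φ'(λ) = λ` inducing the same map differs from
    `φ` by an inner automorphism.
-/

theorem statement17 (k : ℕ)
    {Λ1 Λ2 : Type*} [AddCommGroup Λ1] [AddCommGroup Λ2]
    (b1 : Module.Basis (Fin (2 * k)) ℤ Λ1) (b2 : Module.Basis (Fin (2 * k)) ℤ Λ2)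
    (B1 : Λ1 →ₗ[ℤ] Λ1 →ₗ[ℤ] ℤ) (B2 : Λ2 →ₗ[ℤ] Λ2 →ₗ[ℤ] ℤ)
    (skew1 : ∀ x y, B1 x y = - B1 y x) (skew2 : ∀ x y, B2 x y = - B2 y x)
    (unimod1 : Function.Bijective (fun x => (B1 x : Λ1 →ₗ[ℤ] ℤ)))
    (unimod2 : Function.Bijective (fun x => (B2 x : Λ2 →ₗ[ℤ] ℤ)))
    {Ghat1 Ghat2 : Type*} [Group Ghat1] [Group Ghat2]
    (e1 : ℚ × Λ1 ≃ Ghat1) (e2 : ℚ × Λ2 ≃ Ghat2)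
    (he1 : ∀ p q : ℚ × Λ1,
      e1 p * e1 q = e1 (p.1 + q.1 + ((B1 p.2 q.2 : ℤ) : ℚ), p.2 + q.2))
    (he2 : ∀ p q : ℚ × Λ2,
      e2 p * e2 q = e2 (p.1 + q.1 + ((B2 p.2 q.2 : ℤ) : ℚ), p.2 + q.2))
    (lam1 : Ghat1) (hlam1 : lam1 = e1 (1, 0))
    (lam2 : Ghat2) (hlam2 : lam2 = e2 (1, 0))
    (γ1 : Fin (2 * k) → Ghat1) (hγ1 : ∀ i, γ1 i = e1 (-(1/2 : ℚ), b1 i))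
    (γ2 : Fin (2 * k) → Ghat2) (hγ2 : ∀ i, γ2 i = e2 (-(1/2 : ℚ), b2 i))
    (G1 : Subgroup Ghat1) (hG1 : G1 = Subgroup.closure ({lam1} ∪ Set.range γ1))
    (G2 : Subgroup Ghat2) (hG2 : G2 = Subgroup.closure ({lam2} ∪ Set.range γ2))
    (hlam1G : lam1 ∈ G1) (hγ1G : ∀ i, γ1 i ∈ G1)
    (hlam2G : lam2 ∈ G2) (hγ2G : ∀ i, γ2 i ∈ G2)
    -- the homomorphisms `Υₜ` to `G_{ℤ/2}(Zₜ) = (ℤ/2) × Λₜ`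
    (Υ1 : G1 →* Multiplicative (ZMod 2 × Λ1))
    (Υ2 : G2 →* Multiplicative (ZMod 2 × Λ2))
    (hΥ1lam : Υ1 ⟨lam1, hlam1G⟩ = Multiplicative.ofAdd ((1, 0) : ZMod 2 × Λ1))
    (hΥ1γ : ∀ i, Υ1 ⟨γ1 i, hγ1G i⟩ = Multiplicative.ofAdd ((0, b1 i) : ZMod 2 × Λ1))
    (hΥ2lam : Υ2 ⟨lam2, hlam2G⟩ = Multiplicative.ofAdd ((1, 0) : ZMod 2 × Λ2))
    (hΥ2γ : ∀ i, Υ2 ⟨γ2 i, hγ2G i⟩ = Multiplicative.ofAdd ((0, b2 i) : ZMod 2 × Λ2))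
    -- the isomorphism `φ` with `φ(λ) = λ`
    (φ : G1 ≃* G2) (hφlam : φ ⟨lam1, hlam1G⟩ = ⟨lam2, hlam2G⟩) :
    -- (1) `φ` descends to an isomorphism `φ̄` of the `G_{ℤ/2}`'s
    (∃ φbar : ZMod 2 × Λ1 ≃+ ZMod 2 × Λ2,
      ∀ x : G1, Multiplicative.toAdd (Υ2 (φ x)) = φbar (Multiplicative.toAdd (Υ1 x))) ∧
    -- (2) `φ` is determined, up to inner automorphisms, by the induced map
    (∀ φ' : G1 ≃* G2, φ' ⟨lam1, hlam1G⟩ = ⟨lam2, hlam2G⟩ →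
      (∀ x : G1, Υ2 (φ x) = Υ2 (φ' x)) →
      ∃ g : G2, ∀ x : G1, φ' x = g * φ x * g⁻¹) := by
  have hφslam : φ.symm ⟨lam2, hlam2G⟩ = ⟨lam1, hlam1G⟩ := by
    rw [← hφlam, MulEquiv.symm_apply_apply]
  -- surjectivity of the Υ's
  have hs1 : Function.Surjective Υ1 :=
    ups_surj e1 b1 lam1 γ1 G1 hlam1 hγ1 hlam1G hγ1G Υ1 hΥ1lam hΥ1γ
  have hs2 : Function.Surjective Υ2 :=
    ups_surj e2 b2 lam2 γ2 G2 hlam2 hγ2 hlam2G hγ2G Υ2 hΥ2lam hΥ2γ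
  -- kernel transfer
  have hker1 : ∀ x : G1, Υ1 x = 1 → Υ2 (φ x) = 1 := by
    intro x hx
    obtain ⟨c, hc, hc2⟩ := ker_char B1 e1 b1 lam1 γ1 G1 he1 skew1 hlam1 hγ1 hG1
      hlam1G hγ1G Υ1 hΥ1lam hΥ1γ x hx
    calc Υ2 (φ x) = Υ2 ((⟨lam2, hlam2G⟩ : G2) ^ c) := by rw [hc, map_zpow, hφlam]
    _ = Multiplicative.ofAdd (((c : ZMod 2), 0) : ZMod 2 × Λ2) :=
        ups_lam_pow lam2 G2 hlam2G Υ2 hΥ2lam c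
    _ = 1 := by rw [hc2]; simp
  have hker2 : ∀ y : G2, Υ2 y = 1 → Υ1 (φ.symm y) = 1 := by
    intro y hy
    obtain ⟨c, hc, hc2⟩ := ker_char B2 e2 b2 lam2 γ2 G2 he2 skew2 hlam2 hγ2 hG2
      hlam2G hγ2G Υ2 hΥ2lam hΥ2γ y hy
    calc Υ1 (φ.symm y) = Υ1 ((⟨lam1, hlam1G⟩ : G1) ^ c) := by rw [hc, map_zpow, hφslam]
    _ = Multiplicative.ofAdd (((c : ZMod 2), 0) : ZMod 2 × Λ1) :=
        ups_lam_pow lam1 G1 hlam1G Υ1 hΥ1lam c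
    _ = 1 := by rw [hc2]; simp
  -- lifted maps
  let Φ12 : G1 →* Multiplicative (ZMod 2 × Λ2) := Υ2.comp φ.toMonoidHom
  let Φ21 : G2 →* Multiplicative (ZMod 2 × Λ1) := Υ1.comp φ.symm.toMonoidHom
  have hker1' : Υ1.ker ≤ Φ12.ker := fun x hx => hker1 x hx
  have hker2' : Υ2.ker ≤ Φ21.ker := fun y hy => hker2 y hy
  let ψ := (Υ1.liftOfRightInverse (Function.surjInv hs1)
    (Function.rightInverse_surjInv hs1)) ⟨Φ12, hker1'⟩
  let ψ' := (Υ2.liftOfRightInverse (Function.surjInv hs2)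
    (Function.rightInverse_surjInv hs2)) ⟨Φ21, hker2'⟩
  have hψ : ∀ x : G1, ψ (Υ1 x) = Υ2 (φ x) := fun x =>
    Υ1.liftOfRightInverse_comp_apply _ _ ⟨Φ12, hker1'⟩ x
  have hψ' : ∀ y : G2, ψ' (Υ2 y) = Υ1 (φ.symm y) := fun y =>
    Υ2.liftOfRightInverse_comp_apply _ _ ⟨Φ21, hker2'⟩ y
  have hψψ' : ∀ t, ψ' (ψ t) = t := by
    intro t
    obtain ⟨x, rfl⟩ := hs1 t
    rw [hψ, hψ', MulEquiv.symm_apply_apply]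
  have hψ'ψ : ∀ t, ψ (ψ' t) = t := by
    intro t
    obtain ⟨y, rfl⟩ := hs2 t
    rw [hψ', hψ, MulEquiv.apply_symm_apply]
  constructor
  · refine ⟨{ toFun := fun a => Multiplicative.toAdd (ψ (Multiplicative.ofAdd a))
              invFun := fun a => Multiplicative.toAdd (ψ' (Multiplicative.ofAdd a))
              left_inv := ?_
              right_inv := ?_
              map_add' := ?_ }, ?_⟩
    · intro a
      simp only [ofAdd_toAdd, hψψ', toAdd_ofAdd]
    · intro a
      simp only [ofAdd_toAdd, hψ'ψ, toAdd_ofAdd]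
    · intro a b
      simp only [ofAdd_add, map_mul, toAdd_mul]
    · intro x
      show Multiplicative.toAdd (Υ2 (φ x))
        = Multiplicative.toAdd (ψ (Multiplicative.ofAdd (Multiplicative.toAdd (Υ1 x))))
      rw [ofAdd_toAdd, hψ]
  · intro φ' hφ'lam hsame
    set κ : G2 ≃* G2 := φ.symm.trans φ' with hκdef
    have hκlam : κ ⟨lam2, hlam2G⟩ = ⟨lam2, hlam2G⟩ := by
      show φ' (φ.symm ⟨lam2, hlam2G⟩) = ⟨lam2, hlam2G⟩
      rw [hφslam, hφ'lam]
    have hκΥ : ∀ y : G2, Υ2 (κ y) = Υ2 y := by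
      intro y
      show Υ2 (φ' (φ.symm y)) = Υ2 y
      rw [← hsame (φ.symm y), MulEquiv.apply_symm_apply]
    have lampow2 : ∀ n : ℤ, lam2 ^ n = e2 ((n : ℚ), 0) := by
      intro n
      rw [hlam2, epow B2 e2 he2]
      norm_num
    have hdi : ∀ i, ∃ mi : ℤ,
        κ ⟨γ2 i, hγ2G i⟩ = (⟨lam2, hlam2G⟩ : G2) ^ (2 * mi) * ⟨γ2 i, hγ2G i⟩ := by
      intro i
      have h1 : Υ2 (κ ⟨γ2 i, hγ2G i⟩ * (⟨γ2 i, hγ2G i⟩ : G2)⁻¹) = 1 := by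
        rw [map_mul, map_inv, hκΥ]
        simp
      obtain ⟨c, hc, hc2⟩ := ker_char B2 e2 b2 lam2 γ2 G2 he2 skew2 hlam2 hγ2 hG2
        hlam2G hγ2G Υ2 hΥ2lam hΥ2γ _ h1
      have hdvd : (2 : ℤ) ∣ c := by
        have := (ZMod.intCast_zmod_eq_zero_iff_dvd c 2).mp hc2
        exact_mod_cast this
      obtain ⟨mi, hmi⟩ := hdvd
      refine ⟨mi, ?_⟩
      have h2 : κ ⟨γ2 i, hγ2G i⟩ = (⟨lam2, hlam2G⟩ : G2) ^ c * ⟨γ2 i, hγ2G i⟩ := by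
        rw [← hc]
        group
      rw [h2, hmi]
    choose m hm using hdi
    obtain ⟨g, hg⟩ := unimod2.2 (b2.constr ℤ m)
    obtain ⟨wv, hwG, hwpi⟩ := exists_pi_eq B2 e2 b2 γ2 G2 he2 skew2 hγ2 hγ2G g
    refine ⟨⟨wv, hwG⟩, ?_⟩
    have key : ∀ y : G2, κ.toMonoidHom y = (MulAut.conj (⟨wv, hwG⟩ : G2)).toMonoidHom y := by
      intro y
      refine hom_ext_on_gens G2 _ hG2 _ _ ?_ y
      intro z hz hzk
      rcases hzk with hzl | ⟨i, rfl⟩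
      · simp only [Set.mem_singleton_iff] at hzl
        have hy : (⟨z, hz⟩ : G2) = ⟨lam2, hlam2G⟩ := Subtype.ext hzl
        show κ ⟨z, hz⟩ = (⟨wv, hwG⟩ : G2) * ⟨z, hz⟩ * (⟨wv, hwG⟩ : G2)⁻¹
        rw [hy, hκlam]
        refine Subtype.ext ?_
        show lam2 = wv * lam2 * wv⁻¹
        have hcen : lam2 * wv = wv * lam2 := by
          rw [hlam2]
          exact e_central B2 e2 he2 1 wv
        rw [← hcen]
        group
      · have hy : (⟨γ2 i, hz⟩ : G2) = ⟨γ2 i, hγ2G i⟩ := rfl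
        show κ ⟨γ2 i, hz⟩ = (⟨wv, hwG⟩ : G2) * ⟨γ2 i, hz⟩ * (⟨wv, hwG⟩ : G2)⁻¹
        rw [hy, hm i]
        refine Subtype.ext ?_
        show lam2 ^ (2 * m i) * γ2 i = wv * γ2 i * wv⁻¹
        have hcr := comm_rel B2 e2 he2 skew2 wv (γ2 i)
        have hsndγ : (e2.symm (γ2 i)).2 = b2 i := by rw [hγ2 i, e2.symm_apply_apply]
        rw [hwpi, hsndγ] at hcr
        have hBg : B2 g (b2 i) = m i := by
          rw [show (B2 g : Λ2 →ₗ[ℤ] ℤ) = b2.constr ℤ m from hg]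
          exact b2.constr_basis ℤ m i
        have : wv * γ2 i * wv⁻¹ = e2 (((2 * B2 g (b2 i) : ℤ) : ℚ), 0) * γ2 i := by
          rw [hcr]
          group
        rw [this, hBg, lampow2]
    intro x
    have hk := key (φ x)
    have hl : κ.toMonoidHom (φ x) = φ' x := by
      show φ' (φ.symm (φ x)) = φ' x
      rw [MulEquiv.symm_apply_apply]
    rw [hl] at hk
    rw [hk]
    rfl
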